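/- arXiv:1809.04490 — 5 statements merged into one kernel-verified Lean document; each statement's English description precedes it below -/
import Mathlib

section
/- Let ρ̃ : ℝ×ℝ³ → ℝ, u : ℝ×ℝ³ → ℝ³ and F : ℝ×ℝ³ → Matrix (Fin 3) (Fin 3) ℝ be continuously differentiable, and suppose that at every point the continuity equation ∂ₜρ̃ + ∇·(ρ̃u) = 0 and the deformation-tensor equation ∂ₜF + (u·∇)F = (∇u)F hold. Then the quantity ρ̃ det F satisfies the transport equation ∂ₜ(ρ̃ det F) + u·∇(ρ̃ det F) = 0 at every point. -/
open scoped BigOperators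

/-- Time partial derivative of a scalar field on ℝ × ℝ³. -/
noncomputable def dt (f : ℝ × (Fin 3 → ℝ) → ℝ) (p : ℝ × (Fin 3 → ℝ)) : ℝ :=
  fderiv ℝ f p (1, 0)

/-- Spatial partial derivative in direction `i` of a scalar field on ℝ × ℝ³. -/
noncomputable def dx (i : Fin 3) (f : ℝ × (Fin 3 → ℝ) → ℝ) (p : ℝ × (Fin 3 → ℝ)) : ℝ :=
  fderiv ℝ f p (0, Pi.single i 1)

/-- If the continuity equation `∂ₜρ̃ + ∇·(ρ̃u) = 0` and the deformation equation
`∂ₜF + (u·∇)F = (∇u)F` hold pointwise, then `ρ̃ det F` is transported: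
`∂ₜ(ρ̃ det F) + u·∇(ρ̃ det F) = 0`. -/
theorem rho_detF_transport
    (ρt : ℝ × (Fin 3 → ℝ) → ℝ)
    (u : ℝ × (Fin 3 → ℝ) → Fin 3 → ℝ)
    (F : ℝ × (Fin 3 → ℝ) → Matrix (Fin 3) (Fin 3) ℝ)
    (hρ : ContDiff ℝ 1 ρt)
    (hu : ∀ i, ContDiff ℝ 1 fun p => u p i)
    (hF : ∀ i j, ContDiff ℝ 1 fun p => F p i j)
    (hcont : ∀ p, dt ρt p + ∑ i, dx i (fun q => ρt q * u q i) p = 0)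
    (hFeq : ∀ p i j,
      dt (fun q => F q i j) p + ∑ l, u p l * dx l (fun q => F q i j) p
        = ∑ k, dx k (fun q => u q i) p * F p k j) :
    ∀ p, dt (fun q => ρt q * (F q).det) p
        + ∑ l, u p l * dx l (fun q => ρt q * (F q).det) p = 0 := by
  intro p
  have hρ' : DifferentiableAt ℝ ρt p := (hρ.differentiable one_ne_zero) p
  have hu' : ∀ i, DifferentiableAt ℝ (fun q => u q i) p := fun i => ((hu i).differentiable one_ne_zero) p
  have hF' : ∀ i j, DifferentiableAt ℝ (fun q => F q i j) p := fun i j => ((hF i j).differentiable one_ne_zero) p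
  have hc := hcont p
  have hFe := hFeq p
  simp only [dt, dx, Matrix.det_fin_three, Fin.sum_univ_three] at hc hFe ⊢
  simp (disch := fun_prop) only [fderiv_mul, ContinuousLinearMap.add_apply,
    ContinuousLinearMap.smul_apply, smul_eq_mul, fderiv_add, fderiv_sub,
    fderiv_fun_mul, fderiv_fun_add, fderiv_fun_sub,
    ContinuousLinearMap.sub_apply] at hc hFe ⊢
  linear_combination (F p 0 0*F p 1 1*F p 2 2 - F p 0 0*F p 1 2*F p 2 1 - F p 0 1*F p 1 0*F p 2 2 + F p 0 1*F p 1 2*F p 2 0 + F p 0 2*F p 1 0*F p 2 1 - F p 0 2*F p 1 1*F p 2 0) * hc + ρt p * ((F p 1 1*F p 2 2 - F p 1 2*F p 2 1) * hFe 0 0 + (F p 1 2*F p 2 0 - F p 1 0*F p 2 2) * hFe 0 1 + (F p 1 0*F p 2 1 - F p 1 1*F p 2 0) * hFe 0 2 + (F p 0 2*F p 2 1 - F p 0 1*F p 2 2) * hFe 1 0 + (F p 0 0*F p 2 2 - F p 0 2*F p 2 0) * hFe 1 1 + (F p 0 1*F p 2 0 - F p 0 0*F p 2 1) * hFe 1 2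 + (F p 0 1*F p 1 2 - F p 0 2*F p 1 1) * hFe 2 0 + (F p 0 2*F p 1 0 - F p 0 0*F p 1 2) * hFe 2 1 + (F p 0 0*F p 1 1 - F p 0 1*F p 1 0) * hFe 2 2)
end

section
/- Let u : ℝ×ℝ³ → ℝ³ and F : ℝ×ℝ³ → Matrix (Fin 3) (Fin 3) ℝ be continuously differentiable with det F(t,x) ≠ 0 at every point, and suppose ∂ₜF + (u·∇)F = (∇u)F holds at every point. Then the matrix field M = FFᵀ/(det F) satisfies at every point the evolution identity ∂ₜM + (u·∇)M = (∇u)M + M(∇u)ᵀ − (∇·u)M. -/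
open scoped BigOperators
open Matrix

/-- The matrix field `M = FFᵀ/(det F)`. -/
noncomputable def Mfield (F : ℝ × (Fin 3 → ℝ) → Matrix (Fin 3) (Fin 3) ℝ)
    (p : ℝ × (Fin 3 → ℝ)) : Matrix (Fin 3) (Fin 3) ℝ :=
  ((F p).det)⁻¹ • (F p * (F p)ᵀ)

section Helpers

variable {p v : ℝ × (Fin 3 → ℝ)}

lemma Dmul {f g : ℝ × (Fin 3 → ℝ) → ℝ} (hf : DifferentiableAt ℝ f p)
    (hg : DifferentiableAt ℝ g p) :
    fderiv ℝ (fun q => f q * g q) p v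
      = fderiv ℝ f p v * g p + f p * fderiv ℝ g p v := by
  rw [fderiv_fun_mul hf hg]; simp [mul_comm]; ring

lemma Dmul3 {f g h : ℝ × (Fin 3 → ℝ) → ℝ} (hf : DifferentiableAt ℝ f p)
    (hg : DifferentiableAt ℝ g p) (hh : DifferentiableAt ℝ h p) :
    fderiv ℝ (fun q => f q * g q * h q) p v
      = fderiv ℝ f p v * g p * h p + f p * fderiv ℝ g p v * h p
        + f p * g p * fderiv ℝ h p v := by
  rw [Dmul (hf.fun_mul hg) hh, Dmul hf hg]; ring

lemma Dadd {f g : ℝ × (Fin 3 → ℝ) → ℝ} (hf : DifferentiableAt ℝ f p)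
    (hg : DifferentiableAt ℝ g p) :
    fderiv ℝ (fun q => f q + g q) p v = fderiv ℝ f p v + fderiv ℝ g p v := by
  rw [fderiv_fun_add hf hg]; simp

lemma Dsub {f g : ℝ × (Fin 3 → ℝ) → ℝ} (hf : DifferentiableAt ℝ f p)
    (hg : DifferentiableAt ℝ g p) :
    fderiv ℝ (fun q => f q - g q) p v = fderiv ℝ f p v - fderiv ℝ g p v := by
  rw [fderiv_fun_sub hf hg]; simp

lemma Dinv {f : ℝ × (Fin 3 → ℝ) → ℝ} (hf : DifferentiableAt ℝ f p) (hne : f p ≠ 0) :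
    fderiv ℝ (fun q => (f q)⁻¹) p v
      = -(f p ^ 2)⁻¹ * fderiv ℝ f p v := by
  have h := ((hasFDerivAt_inv hne).comp p hf.hasFDerivAt).fderiv
  have h2 : (fun q => (f q)⁻¹) = (fun x => x⁻¹) ∘ f := rfl
  rw [h2, h]; simp [mul_comm]

lemma Dsum {f : Fin 3 → (ℝ × (Fin 3 → ℝ)) → ℝ} (hf : ∀ k, DifferentiableAt ℝ (f k) p) :
    fderiv ℝ (fun q => ∑ k, f k q) p v = ∑ k, fderiv ℝ (f k) p v := by
  rw [fderiv_fun_sum (fun i _ => hf i)]; simp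

lemma key {u : ℝ × (Fin 3 → ℝ) → Fin 3 → ℝ} {f : ℝ × (Fin 3 → ℝ) → ℝ} :
    fderiv ℝ f p (1, 0) + ∑ l, u p l * fderiv ℝ f p (0, Pi.single l 1)
      = fderiv ℝ f p (1, u p) := by
  have h1 : ((1:ℝ), u p) = ((1:ℝ), (0 : Fin 3 → ℝ))
      + ∑ l, u p l • (((0:ℝ), Pi.single l (1:ℝ)) : ℝ × (Fin 3 → ℝ)) := by
    have h2 : ∑ l, u p l • (((0:ℝ), Pi.single l (1:ℝ)) : ℝ × (Fin 3 → ℝ))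
        = ((0:ℝ), u p) := by
      rw [Prod.ext_iff]
      constructor
      · simp [Prod.fst_sum]
      · rw [Prod.snd_sum]
        simp only [Prod.smul_mk]
        have : ∀ l : Fin 3, u p l • (Pi.single l (1:ℝ) : Fin 3 → ℝ)
            = Pi.single l (u p l) := by
          intro l; rw [← Pi.single_smul]; simp
        simp only [this]
        exact Finset.univ_sum_single (u p)
    rw [h2]
    simp
  rw [h1, map_add, map_sum]
  congr 1
  refine Finset.sum_congr rfl fun l _ => ?_
  rw [(fderiv ℝ f p).map_smul]
  simp

end Helpers

/-- If `∂ₜF + (u·∇)F = (∇u)F` holds pointwise and `det F ≠ 0`, then the field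
`M = FFᵀ/(det F)` satisfies `∂ₜM + (u·∇)M = (∇u)M + M(∇u)ᵀ − (∇·u)M` entrywise. -/
theorem M_evolution
    (u : ℝ × (Fin 3 → ℝ) → Fin 3 → ℝ)
    (F : ℝ × (Fin 3 → ℝ) → Matrix (Fin 3) (Fin 3) ℝ)
    (hu : ∀ i, ContDiff ℝ 1 fun p => u p i)
    (hF : ∀ i j, ContDiff ℝ 1 fun p => F p i j)
    (hdet : ∀ p, (F p).det ≠ 0)
    (hFeq : ∀ p i j,
      dt (fun q => F q i j) p + ∑ l, u p l * dx l (fun q => F q i j) p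
        = ∑ k, dx k (fun q => u q i) p * F p k j) :
    ∀ p i j,
      dt (fun q => Mfield F q i j) p + ∑ l, u p l * dx l (fun q => Mfield F q i j) p
        = (∑ k, dx k (fun q => u q i) p * Mfield F p k j)
          + (∑ k, Mfield F p i k * dx k (fun q => u q j) p)
          - (∑ l, dx l (fun q => u q l) p) * Mfield F p i j := by
  intro p i j
  -- basic differentiability
  have hdiff : ∀ i j, DifferentiableAt ℝ (fun q => F q i j) p :=
    fun i j => ((hF i j).differentiable one_ne_zero).differentiableAt
  -- determinant as explicit polynomial
  have hd_eq : (fun q => (F q).det)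
      = fun q => F q 0 0 * F q 1 1 * F q 2 2 - F q 0 0 * F q 1 2 * F q 2 1
        - F q 0 1 * F q 1 0 * F q 2 2 + F q 0 1 * F q 1 2 * F q 2 0
        + F q 0 2 * F q 1 0 * F q 2 1 - F q 0 2 * F q 1 1 * F q 2 0 :=
    funext fun q => Matrix.det_fin_three (F q)
  have hdDA : DifferentiableAt ℝ (fun q => (F q).det) p := by
    rw [hd_eq]
    exact ((((((hdiff 0 0).fun_mul (hdiff 1 1)).fun_mul (hdiff 2 2)).fun_sub
      (((hdiff 0 0).fun_mul (hdiff 1 2)).fun_mul (hdiff 2 1))).fun_sub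
      (((hdiff 0 1).fun_mul (hdiff 1 0)).fun_mul (hdiff 2 2))).fun_add
      (((hdiff 0 1).fun_mul (hdiff 1 2)).fun_mul (hdiff 2 0))).fun_add
      (((hdiff 0 2).fun_mul (hdiff 1 0)).fun_mul (hdiff 2 1)) |>.fun_sub
      (((hdiff 0 2).fun_mul (hdiff 1 1)).fun_mul (hdiff 2 0))
  -- the advection direction
  set v : ℝ × (Fin 3 → ℝ) := ((1:ℝ), u p) with hv
  -- material derivative of entries of F
  have e : ∀ i j, fderiv ℝ (fun q => F q i j) p v
      = ∑ k, dx k (fun q => u q i) p * F p k j := by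
    intro i j
    rw [← key]
    exact hFeq p i j
  -- entry form of Mfield
  have hS : ∀ i j : Fin 3, DifferentiableAt ℝ (fun q => ∑ k, F q i k * F q j k) p := by
    intro i j
    exact DifferentiableAt.fun_sum fun k _ => (hdiff i k).fun_mul (hdiff j k)
  have hM : ∀ i j : Fin 3, (fun q => Mfield F q i j)
      = fun q => ((F q).det)⁻¹ * ∑ k, F q i k * F q j k := by
    intro i j
    funext q
    simp [Mfield, Matrix.mul_apply, Matrix.transpose_apply]
  have hMd : ∀ i j : Fin 3, DifferentiableAt ℝ (fun q => Mfield F q i j) p := by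
    intro i j
    rw [hM i j]
    exact (hdDA.inv (hdet p)).fun_mul (hS i j)
  -- LHS as a single directional derivative
  have lhs_eq : dt (fun q => Mfield F q i j) p
      + ∑ l, u p l * dx l (fun q => Mfield F q i j) p
      = fderiv ℝ (fun q => Mfield F q i j) p v := key
  rw [lhs_eq, hM i j]
  -- derivative of the determinant along v
  have hDd : fderiv ℝ (fun q => (F q).det) p v
      = fderiv ℝ (fun q => F q 0 0) p v * F p 1 1 * F p 2 2
        + F p 0 0 * fderiv ℝ (fun q => F q 1 1) p v * F p 2 2
        + F p 0 0 * F p 1 1 * fderiv ℝ (fun q => F q 2 2) p v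
        - (fderiv ℝ (fun q => F q 0 0) p v * F p 1 2 * F p 2 1
        + F p 0 0 * fderiv ℝ (fun q => F q 1 2) p v * F p 2 1
        + F p 0 0 * F p 1 2 * fderiv ℝ (fun q => F q 2 1) p v)
        - (fderiv ℝ (fun q => F q 0 1) p v * F p 1 0 * F p 2 2
        + F p 0 1 * fderiv ℝ (fun q => F q 1 0) p v * F p 2 2
        + F p 0 1 * F p 1 0 * fderiv ℝ (fun q => F q 2 2) p v)
        + (fderiv ℝ (fun q => F q 0 1) p v * F p 1 2 * F p 2 0
        + F p 0 1 * fderiv ℝ (fun q => F q 1 2) p v * F p 2 0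
        + F p 0 1 * F p 1 2 * fderiv ℝ (fun q => F q 2 0) p v)
        + (fderiv ℝ (fun q => F q 0 2) p v * F p 1 0 * F p 2 1
        + F p 0 2 * fderiv ℝ (fun q => F q 1 0) p v * F p 2 1
        + F p 0 2 * F p 1 0 * fderiv ℝ (fun q => F q 2 1) p v)
        - (fderiv ℝ (fun q => F q 0 2) p v * F p 1 1 * F p 2 0
        + F p 0 2 * fderiv ℝ (fun q => F q 1 1) p v * F p 2 0
        + F p 0 2 * F p 1 1 * fderiv ℝ (fun q => F q 2 0) p v) := by
    rw [hd_eq]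
    rw [Dsub (((((((hdiff 0 0).fun_mul (hdiff 1 1)).fun_mul (hdiff 2 2)).fun_sub
        (((hdiff 0 0).fun_mul (hdiff 1 2)).fun_mul (hdiff 2 1))).fun_sub
        (((hdiff 0 1).fun_mul (hdiff 1 0)).fun_mul (hdiff 2 2))).fun_add
        (((hdiff 0 1).fun_mul (hdiff 1 2)).fun_mul (hdiff 2 0))).fun_add
        (((hdiff 0 2).fun_mul (hdiff 1 0)).fun_mul (hdiff 2 1)))
        (((hdiff 0 2).fun_mul (hdiff 1 1)).fun_mul (hdiff 2 0)),
      Dadd ((((((hdiff 0 0).fun_mul (hdiff 1 1)).fun_mul (hdiff 2 2)).fun_sub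
        (((hdiff 0 0).fun_mul (hdiff 1 2)).fun_mul (hdiff 2 1))).fun_sub
        (((hdiff 0 1).fun_mul (hdiff 1 0)).fun_mul (hdiff 2 2))).fun_add
        (((hdiff 0 1).fun_mul (hdiff 1 2)).fun_mul (hdiff 2 0)))
        (((hdiff 0 2).fun_mul (hdiff 1 0)).fun_mul (hdiff 2 1)),
      Dadd (((((hdiff 0 0).fun_mul (hdiff 1 1)).fun_mul (hdiff 2 2)).fun_sub
        (((hdiff 0 0).fun_mul (hdiff 1 2)).fun_mul (hdiff 2 1))).fun_sub
        (((hdiff 0 1).fun_mul (hdiff 1 0)).fun_mul (hdiff 2 2)))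
        (((hdiff 0 1).fun_mul (hdiff 1 2)).fun_mul (hdiff 2 0)),
      Dsub ((((hdiff 0 0).fun_mul (hdiff 1 1)).fun_mul (hdiff 2 2)).fun_sub
        (((hdiff 0 0).fun_mul (hdiff 1 2)).fun_mul (hdiff 2 1)))
        (((hdiff 0 1).fun_mul (hdiff 1 0)).fun_mul (hdiff 2 2)),
      Dsub (((hdiff 0 0).fun_mul (hdiff 1 1)).fun_mul (hdiff 2 2))
        (((hdiff 0 0).fun_mul (hdiff 1 2)).fun_mul (hdiff 2 1)),
      Dmul3 (hdiff 0 0) (hdiff 1 1) (hdiff 2 2),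
      Dmul3 (hdiff 0 0) (hdiff 1 2) (hdiff 2 1),
      Dmul3 (hdiff 0 1) (hdiff 1 0) (hdiff 2 2),
      Dmul3 (hdiff 0 1) (hdiff 1 2) (hdiff 2 0),
      Dmul3 (hdiff 0 2) (hdiff 1 0) (hdiff 2 1),
      Dmul3 (hdiff 0 2) (hdiff 1 1) (hdiff 2 0)]
  -- derivative of the product (det)⁻¹ * S
  rw [Dmul (f := fun q => ((F q).det)⁻¹) (hdDA.inv (hdet p)) (hS i j), Dinv hdDA (hdet p),
    Dsum (fun k => (hdiff i k).fun_mul (hdiff j k))]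
  have hDS : ∀ k : Fin 3, fderiv ℝ (fun q => F q i k * F q j k) p v
      = fderiv ℝ (fun q => F q i k) p v * F p j k
        + F p i k * fderiv ℝ (fun q => F q j k) p v :=
    fun k => Dmul (hdiff i k) (hdiff j k)
  simp only [hDS, hDd, e, hM, Mfield, Matrix.smul_apply, Matrix.mul_apply,
    Matrix.transpose_apply, smul_eq_mul]
  have hd3 := hdet p
  simp only [Fin.sum_univ_three]
  field_simp
  rw [Matrix.det_fin_three (F p)]
  ring
end

section
/- Let ρ̃ : ℝ×ℝ³ → ℝ, u : ℝ×ℝ³ → ℝ³ and F : ℝ×ℝ³ → Matrix (Fin 3) (Fin 3) ℝ be twice continuously differentiable with det F ≠ 0 everywhere, let P : ℝ → ℝ be twice continuously differentiable, and suppose that at every point ∂ₜρ̃ + ∇·(ρ̃u) = 0 and ∂ₜF + (u·∇)F = (∇u)F. Define M = FFᵀ/(det F), ρ = ρ̃ − 1, G = M − I − (P(ρ̃) − P(1))I, q = P′(ρ+1)(ρ+1) − P′(1), g = −(∇u)(M − I) − (M − I)(∇u)ᵀ + (∇·u)(M − I), and the effective flux 𝒢 = ∇·G (the row divergence of G). Then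 at every point ∂ₜ𝒢 + ∇·((u·∇)G) − ∇(q ∇·u) + ∇·g = Δu + P′(1)∇(∇·u). -/
open scoped BigOperators
open Matrix

/-- The effective tensor `G = M − I − (P(ρ̃) − P(1))I`. -/
noncomputable def Gfield (P : ℝ → ℝ) (ρt : ℝ × (Fin 3 → ℝ) → ℝ)
    (F : ℝ × (Fin 3 → ℝ) → Matrix (Fin 3) (Fin 3) ℝ)
    (p : ℝ × (Fin 3 → ℝ)) : Matrix (Fin 3) (Fin 3) ℝ :=
  Mfield F p - 1 - (P (ρt p) - P 1) • (1 : Matrix (Fin 3) (Fin 3) ℝ)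

/-- Divergence `∇·u` of the velocity field. -/
noncomputable def divU (u : ℝ × (Fin 3 → ℝ) → Fin 3 → ℝ) (p : ℝ × (Fin 3 → ℝ)) : ℝ :=
  ∑ i, dx i (fun q => u q i) p

/-- The scalar `q = P′(ρ+1)(ρ+1) − P′(1)` with `ρ = ρ̃ − 1`. -/
noncomputable def qfun (P : ℝ → ℝ) (ρt : ℝ × (Fin 3 → ℝ) → ℝ)
    (p : ℝ × (Fin 3 → ℝ)) : ℝ :=
  deriv P ((ρt p - 1) + 1) * ((ρt p - 1) + 1) - deriv P 1

/-- The matrix `g = −(∇u)(M − I) − (M − I)(∇u)ᵀ + (∇·u)(M − I)`. -/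
noncomputable def gfun (u : ℝ × (Fin 3 → ℝ) → Fin 3 → ℝ)
    (F : ℝ × (Fin 3 → ℝ) → Matrix (Fin 3) (Fin 3) ℝ)
    (p : ℝ × (Fin 3 → ℝ)) : Matrix (Fin 3) (Fin 3) ℝ :=
  Matrix.of fun i j =>
    -(∑ k, dx k (fun q => u q i) p * (Mfield F p - 1) k j)
    - (∑ k, (Mfield F p - 1) i k * dx k (fun q => u q j) p)
    + divU u p * (Mfield F p - 1) i j


noncomputable def pd (v : ℝ × (Fin 3 → ℝ)) (f : ℝ × (Fin 3 → ℝ) → ℝ)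
    (p : ℝ × (Fin 3 → ℝ)) : ℝ := fderiv ℝ f p v

namespace Helper

variable {f g : ℝ × (Fin 3 → ℝ) → ℝ} {p v vv : ℝ × (Fin 3 → ℝ)} {P : ℝ → ℝ}

lemma pd_add (hf : DifferentiableAt ℝ f p) (hg : DifferentiableAt ℝ g p) :
    pd v (fun q => f q + g q) p = pd v f p + pd v g p := by
  unfold pd; rw [fderiv_fun_add hf hg]; rfl

lemma pd_sub (hf : DifferentiableAt ℝ f p) (hg : DifferentiableAt ℝ g p) :
    pd v (fun q => f q - g q) p = pd v f p - pd v g p := by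
  unfold pd; rw [fderiv_fun_sub hf hg]; rfl

lemma pd_mul (hf : DifferentiableAt ℝ f p) (hg : DifferentiableAt ℝ g p) :
    pd v (fun q => f q * g q) p = pd v f p * g p + f p * pd v g p := by
  unfold pd; rw [fderiv_fun_mul hf hg]; simp [smul_eq_mul]; ring

lemma pd_const (c : ℝ) : pd v (fun _ => c) p = 0 := by
  unfold pd; rw [fderiv_const_apply]; rfl

lemma pd_sum {ι : Type*} (s : Finset ι) (f : ι → ℝ × (Fin 3 → ℝ) → ℝ)
    (hf : ∀ i ∈ s, DifferentiableAt ℝ (f i) p) :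
    pd v (fun q => ∑ i ∈ s, f i q) p = ∑ i ∈ s, pd v (f i) p := by
  unfold pd; rw [fderiv_fun_sum hf]; simp

lemma pd_comp (hP : DifferentiableAt ℝ P (f p)) (hf : DifferentiableAt ℝ f p) :
    pd v (fun q => P (f q)) p = deriv P (f p) * pd v f p := by
  unfold pd
  have h := (hP.hasDerivAt.comp_hasFDerivAt p hf.hasFDerivAt)
  have h' : HasFDerivAt (fun q => P (f q)) (deriv P (f p) • fderiv ℝ f p) p := h
  rw [h'.fderiv]; simp [smul_eq_mul]

lemma pd_inv (hf : DifferentiableAt ℝ f p) (h0 : f p ≠ 0) :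
    pd v (fun q => (f q)⁻¹) p = -(f p ^ 2)⁻¹ * pd v f p := by
  unfold pd
  have h := ((hasDerivAt_inv h0).comp_hasFDerivAt p hf.hasFDerivAt)
  have h' : HasFDerivAt (fun q => (f q)⁻¹) ((-(f p ^ 2)⁻¹) • fderiv ℝ f p) p := h
  rw [h'.fderiv]; simp [smul_eq_mul]

lemma contDiff_pd (hf : ContDiff ℝ 2 f) : ContDiff ℝ 1 (fun q => pd v f q) := by
  have h1 : ContDiff ℝ 1 (fderiv ℝ f) := hf.fderiv_right (by norm_num)
  exact (ContinuousLinearMap.apply ℝ ℝ v).contDiff.comp h1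

lemma pd_pd (hf : ContDiff ℝ 2 f) :
    pd v (fun q => pd vv f q) p = fderiv ℝ (fderiv ℝ f) p v vv := by
  have h1 : HasFDerivAt (fderiv ℝ f) (fderiv ℝ (fderiv ℝ f) p) p :=
    ((hf.fderiv_right (m := 1) (by norm_num)).differentiable (by simp)).differentiableAt.hasFDerivAt
  have h2 := (ContinuousLinearMap.apply ℝ ℝ vv).hasFDerivAt.comp p h1
  have h2' : HasFDerivAt (fun q => (fderiv ℝ f q) vv)
      (((ContinuousLinearMap.apply ℝ ℝ) vv).comp (fderiv ℝ (fderiv ℝ f) p)) p := h2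
  unfold pd
  rw [h2'.fderiv]; rfl

lemma pd_swap (hf : ContDiff ℝ 2 f) :
    pd v (fun q => pd vv f q) p = pd vv (fun q => pd v f q) p := by
  rw [pd_pd hf, pd_pd hf]
  exact (hf.contDiffAt.isSymmSndFDerivAt (by norm_num)) v vv

lemma dt_eq : dt f p = pd ((1:ℝ), (0 : Fin 3 → ℝ)) f p := rfl
lemma dx_eq (i : Fin 3) : dx i f p = pd ((0:ℝ), Pi.single i (1:ℝ)) f p := rfl


lemma dir_eq (u : (ℝ × (Fin 3 → ℝ)) → Fin 3 → ℝ) (q : ℝ × (Fin 3 → ℝ)) :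
    ((1:ℝ), u q) = (((1:ℝ),(0:Fin 3 → ℝ)) : ℝ × (Fin 3 → ℝ))
      + ∑ l : Fin 3, u q l • ((((0:ℝ), Pi.single l (1:ℝ))) : ℝ × (Fin 3 → ℝ)) := by
  rw [Prod.ext_iff]
  constructor
  · rw [Prod.fst_add, Prod.fst_sum]; simp
  · rw [Prod.snd_add, Prod.snd_sum]
    simp only [Prod.snd, smul_zero, Prod.smul_mk]
    rw [zero_add]
    funext x
    rw [Finset.sum_apply]
    simp [Pi.single_apply, Finset.sum_ite_eq]

lemma pd_one_u (u : (ℝ × (Fin 3 → ℝ)) → Fin 3 → ℝ) (f : ℝ × (Fin 3 → ℝ) → ℝ)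
    (q : ℝ × (Fin 3 → ℝ)) :
    pd ((1:ℝ), u q) f q = dt f q + ∑ l, u q l * dx l f q := by
  unfold pd dt dx
  rw [dir_eq u q, map_add, map_sum]
  congr 1
  refine Finset.sum_congr rfl fun l _ => ?_
  rw [_root_.map_smul]
  simp [smul_eq_mul]


lemma det_pd (F : ℝ × (Fin 3 → ℝ) → Matrix (Fin 3) (Fin 3) ℝ)
    (u : ℝ × (Fin 3 → ℝ) → Fin 3 → ℝ)
    (hF : ∀ i j, Differentiable ℝ fun p => F p i j)
    (hFeq : ∀ p i j,
      dt (fun q => F q i j) p + ∑ l, u p l * dx l (fun q => F q i j) p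
        = ∑ k, dx k (fun q => u q i) p * F p k j)
    (q : ℝ × (Fin 3 → ℝ)) :
    pd ((1:ℝ), u q) (fun r => (F r).det) q = (F q).det * divU u q := by
  have hA : ∀ a b, pd ((1:ℝ), u q) (fun r => F r a b) q
      = ∑ k, dx k (fun r => u r a) q * F q k b := fun a b => by
    rw [pd_one_u]; exact hFeq q a b
  have h00 := hF 0 0; have h01 := hF 0 1; have h02 := hF 0 2
  have h10 := hF 1 0; have h11 := hF 1 1; have h12 := hF 1 2
  have h20 := hF 2 0; have h21 := hF 2 1; have h22 := hF 2 2
  rw [show (fun r => (F r).det) = fun r =>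
      F r 0 0 * F r 1 1 * F r 2 2 - F r 0 0 * F r 1 2 * F r 2 1 -
      F r 0 1 * F r 1 0 * F r 2 2 + F r 0 1 * F r 1 2 * F r 2 0 +
      F r 0 2 * F r 1 0 * F r 2 1 - F r 0 2 * F r 1 1 * F r 2 0
    from funext fun r => Matrix.det_fin_three _]
  simp (disch := fun_prop) only [pd_sub, pd_add, pd_mul]
  simp only [hA]
  simp only [divU, Matrix.det_fin_three, Fin.sum_univ_three]
  ring


lemma rho_pd (ρt : ℝ × (Fin 3 → ℝ) → ℝ) (u : ℝ × (Fin 3 → ℝ) → Fin 3 → ℝ)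
    (hρ : Differentiable ℝ ρt) (hu : ∀ i, Differentiable ℝ fun p => u p i)
    (hcont : ∀ p, dt ρt p + ∑ i, dx i (fun q => ρt q * u q i) p = 0)
    (q : ℝ × (Fin 3 → ℝ)) :
    pd ((1:ℝ), u q) ρt q = -(ρt q * divU u q) := by
  have h := hcont q
  have hexp : ∀ i : Fin 3, dx i (fun r => ρt r * u r i) q
      = dx i ρt q * u q i + ρt q * dx i (fun r => u r i) q := fun i => by
    simp only [dx_eq]
    rw [pd_mul hρ.differentiableAt ((hu i).differentiableAt)]
  simp only [hexp] at h
  rw [pd_one_u]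
  simp only [divU, Fin.sum_univ_three] at h ⊢
  linear_combination h

noncomputable def Mf (F : ℝ × (Fin 3 → ℝ) → Matrix (Fin 3) (Fin 3) ℝ)
    (a b : Fin 3) (r : ℝ × (Fin 3 → ℝ)) : ℝ :=
  ((F r).det)⁻¹ * ∑ k, F r a k * F r b k

lemma det_diff (F : ℝ × (Fin 3 → ℝ) → Matrix (Fin 3) (Fin 3) ℝ)
    (hF : ∀ i j, Differentiable ℝ fun p => F p i j) :
    Differentiable ℝ (fun r => (F r).det) := by
  have h00 := hF 0 0; have h01 := hF 0 1; have h02 := hF 0 2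
  have h10 := hF 1 0; have h11 := hF 1 1; have h12 := hF 1 2
  have h20 := hF 2 0; have h21 := hF 2 1; have h22 := hF 2 2
  rw [show (fun r => (F r).det) = fun r =>
      F r 0 0 * F r 1 1 * F r 2 2 - F r 0 0 * F r 1 2 * F r 2 1 -
      F r 0 1 * F r 1 0 * F r 2 2 + F r 0 1 * F r 1 2 * F r 2 0 +
      F r 0 2 * F r 1 0 * F r 2 1 - F r 0 2 * F r 1 1 * F r 2 0
    from funext fun r => Matrix.det_fin_three _]
  fun_prop

lemma M_pd (F : ℝ × (Fin 3 → ℝ) → Matrix (Fin 3) (Fin 3) ℝ)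
    (u : ℝ × (Fin 3 → ℝ) → Fin 3 → ℝ)
    (hF : ∀ i j, Differentiable ℝ fun p => F p i j)
    (hdet : ∀ p, (F p).det ≠ 0)
    (hFeq : ∀ p i j,
      dt (fun q => F q i j) p + ∑ l, u p l * dx l (fun q => F q i j) p
        = ∑ k, dx k (fun q => u q i) p * F p k j)
    (q : ℝ × (Fin 3 → ℝ)) (a b : Fin 3) :
    pd ((1:ℝ), u q) (Mf F a b) q
      = (∑ k, dx k (fun r => u r a) q * Mf F k b q)
        + (∑ k, Mf F a k q * dx k (fun r => u r b) q)
        - divU u q * Mf F a b q := by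
  have hA : ∀ a b, pd ((1:ℝ), u q) (fun r => F r a b) q
      = ∑ k, dx k (fun r => u r a) q * F q k b := fun a b => by
    rw [pd_one_u]; exact hFeq q a b
  have hd := det_diff F hF
  have hdet1 := det_pd F u hF hFeq q
  have hprod : ∀ (a b k : Fin 3), pd ((1:ℝ), u q) (fun r => F r a k * F r b k) q
      = (∑ m, dx m (fun r => u r a) q * F q m k) * F q b k
        + F q a k * (∑ m, dx m (fun r => u r b) q * F q m k) := fun a b k => by
    rw [pd_mul ((hF a k).differentiableAt) ((hF b k).differentiableAt), hA, hA]
  unfold Mf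
  rw [pd_mul ((hd.differentiableAt).fun_inv (hdet q))
      (by have h1 := hF a 0; have h2 := hF a 1; have h3 := hF a 2
          have h4 := hF b 0; have h5 := hF b 1; have h6 := hF b 2
          simp only [Fin.sum_univ_three]; fun_prop),
    pd_inv hd.differentiableAt (hdet q), hdet1,
    pd_sum _ _ (fun k _ => ((hF a k).differentiableAt).fun_mul ((hF b k).differentiableAt))]
  rw [show -((F q).det ^ 2)⁻¹ * ((F q).det * divU u q)
      = -(((F q).det)⁻¹ * divU u q) by field_simp [hdet q]]
  simp only [hprod]
  simp only [divU, Fin.sum_univ_three]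
  ring


noncomputable def Gf (P : ℝ → ℝ) (ρt : ℝ × (Fin 3 → ℝ) → ℝ)
    (F : ℝ × (Fin 3 → ℝ) → Matrix (Fin 3) (Fin 3) ℝ) (a b : Fin 3)
    (r : ℝ × (Fin 3 → ℝ)) : ℝ :=
  Mf F a b r - (if a = b then (1:ℝ) else 0) - (P (ρt r) - P 1) * (if a = b then (1:ℝ) else 0)

lemma Mfield_apply (F : ℝ × (Fin 3 → ℝ) → Matrix (Fin 3) (Fin 3) ℝ)
    (q : ℝ × (Fin 3 → ℝ)) (a b : Fin 3) : Mfield F q a b = Mf F a b q := by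
  simp [Mfield, Mf, Matrix.smul_apply, Matrix.mul_apply, Matrix.transpose_apply, smul_eq_mul]

lemma Msub_apply (F : ℝ × (Fin 3 → ℝ) → Matrix (Fin 3) (Fin 3) ℝ)
    (q : ℝ × (Fin 3 → ℝ)) (a b : Fin 3) :
    (Mfield F q - 1) a b = Mf F a b q - (if a = b then (1:ℝ) else 0) := by
  simp [Matrix.sub_apply, Matrix.one_apply, Mfield_apply]

lemma Gfield_apply (P : ℝ → ℝ) (ρt : ℝ × (Fin 3 → ℝ) → ℝ)
    (F : ℝ × (Fin 3 → ℝ) → Matrix (Fin 3) (Fin 3) ℝ)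
    (q : ℝ × (Fin 3 → ℝ)) (a b : Fin 3) :
    Gfield P ρt F q a b = Gf P ρt F a b q := by
  simp [Gfield, Gf, Matrix.sub_apply, Matrix.smul_apply, Matrix.one_apply, Mfield_apply]

lemma Mf_diffAt (F : ℝ × (Fin 3 → ℝ) → Matrix (Fin 3) (Fin 3) ℝ)
    (hF : ∀ i j, Differentiable ℝ fun p => F p i j)
    (hdet : ∀ p, (F p).det ≠ 0) (q : ℝ × (Fin 3 → ℝ)) (a b : Fin 3) :
    DifferentiableAt ℝ (Mf F a b) q := by
  unfold Mf
  refine DifferentiableAt.mul (((det_diff F hF).differentiableAt).inv (hdet q)) ?_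
  simp only [Fin.sum_univ_three]
  exact ((((hF a 0).differentiableAt).mul ((hF b 0).differentiableAt)).add
    (((hF a 1).differentiableAt).mul ((hF b 1).differentiableAt))).add
    (((hF a 2).differentiableAt).mul ((hF b 2).differentiableAt))

lemma G_pd (ρt : ℝ × (Fin 3 → ℝ) → ℝ) (u : ℝ × (Fin 3 → ℝ) → Fin 3 → ℝ)
    (F : ℝ × (Fin 3 → ℝ) → Matrix (Fin 3) (Fin 3) ℝ) (P : ℝ → ℝ)
    (hρ : Differentiable ℝ ρt)
    (hu : ∀ i, Differentiable ℝ fun p => u p i)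
    (hF : ∀ i j, Differentiable ℝ fun p => F p i j)
    (hP : Differentiable ℝ P)
    (hdet : ∀ p, (F p).det ≠ 0)
    (hcont : ∀ p, dt ρt p + ∑ i, dx i (fun q => ρt q * u q i) p = 0)
    (hFeq : ∀ p i j,
      dt (fun q => F q i j) p + ∑ l, u p l * dx l (fun q => F q i j) p
        = ∑ k, dx k (fun q => u q i) p * F p k j)
    (q : ℝ × (Fin 3 → ℝ)) (a b : Fin 3) :
    pd ((1:ℝ), u q) (Gf P ρt F a b) q
      = -(gfun u F q a b) + (if a = b then (1:ℝ) else 0) * (qfun P ρt q * divU u q)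
        + dx b (fun r => u r a) q + dx a (fun r => u r b) q
        + (if a = b then (1:ℝ) else 0) * ((deriv P 1 - 1) * divU u q) := by
  have hMd := Mf_diffAt F hF hdet q
  have h1 : DifferentiableAt ℝ (fun r => P (ρt r)) q :=
    DifferentiableAt.comp q (hP _) hρ.differentiableAt
  unfold Gf
  rw [pd_sub (DifferentiableAt.fun_sub (hMd a b) (differentiableAt_const _))
      (DifferentiableAt.fun_mul (h1.fun_sub (differentiableAt_const _)) (differentiableAt_const _)),
    pd_sub (hMd a b) (differentiableAt_const _), pd_const,
    pd_mul (h1.fun_sub (differentiableAt_const _)) (differentiableAt_const _),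
    pd_sub h1 (differentiableAt_const _), pd_const,
    pd_comp (hP _) hρ.differentiableAt,
    rho_pd ρt u hρ hu hcont q,
    M_pd F u hF hdet hFeq q a b]
  simp only [pd_const]
  simp only [gfun, Matrix.of_apply, qfun, Msub_apply, sub_add_cancel]
  simp only [Fin.sum_univ_three]
  fin_cases a <;> fin_cases b <;> simp <;> try ring


lemma pd_neg {f : ℝ × (Fin 3 → ℝ) → ℝ} {p v : ℝ × (Fin 3 → ℝ)} :
    pd v (fun q => -f q) p = -pd v f p := by
  unfold pd; rw [fderiv_fun_neg]; rfl

lemma pd_const_mul {f : ℝ × (Fin 3 → ℝ) → ℝ} {p v : ℝ × (Fin 3 → ℝ)} (c : ℝ)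
    (hf : DifferentiableAt ℝ f p) :
    pd v (fun q => c * f q) p = c * pd v f p := by
  rw [pd_mul (differentiableAt_const c) hf, pd_const]; ring

lemma dx_neg {f : ℝ × (Fin 3 → ℝ) → ℝ} {p : ℝ × (Fin 3 → ℝ)} (a : Fin 3) :
    dx a (fun q => -f q) p = -dx a f p := pd_neg

lemma dx_const_mul {f : ℝ × (Fin 3 → ℝ) → ℝ} {p : ℝ × (Fin 3 → ℝ)} (a : Fin 3) (c : ℝ)
    (hf : DifferentiableAt ℝ f p) :
    dx a (fun q => c * f q) p = c * dx a f p := pd_const_mul c hf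

lemma dt_sum {p : ℝ × (Fin 3 → ℝ)} (s : Finset (Fin 3)) (f : Fin 3 → ℝ × (Fin 3 → ℝ) → ℝ)
    (hf : ∀ i ∈ s, DifferentiableAt ℝ (f i) p) :
    dt (fun q => ∑ j ∈ s, f j q) p = ∑ j ∈ s, dt (f j) p := pd_sum s f hf

lemma dx_sum {p : ℝ × (Fin 3 → ℝ)} (a : Fin 3) (s : Finset (Fin 3)) (f : Fin 3 → ℝ × (Fin 3 → ℝ) → ℝ)
    (hf : ∀ i ∈ s, DifferentiableAt ℝ (f i) p) :
    dx a (fun q => ∑ j ∈ s, f j q) p = ∑ j ∈ s, dx a (f j) p := pd_sum s f hf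

lemma dx_add {f g : ℝ × (Fin 3 → ℝ) → ℝ} {p : ℝ × (Fin 3 → ℝ)} (a : Fin 3)
    (hf : DifferentiableAt ℝ f p) (hg : DifferentiableAt ℝ g p) :
    dx a (fun q => f q + g q) p = dx a f p + dx a g p := pd_add hf hg

lemma dt_dx_swap {f : ℝ × (Fin 3 → ℝ) → ℝ} {p : ℝ × (Fin 3 → ℝ)} {a : Fin 3}
    (hf : ContDiff ℝ 2 f) :
    dt (fun q => dx a f q) p = dx a (fun q => dt f q) p := pd_swap hf

lemma dx_dx_swap {f : ℝ × (Fin 3 → ℝ) → ℝ} {p : ℝ × (Fin 3 → ℝ)} {a b : Fin 3}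
    (hf : ContDiff ℝ 2 f) :
    dx a (fun q => dx b f q) p = dx b (fun q => dx a f q) p := pd_swap hf

lemma dx_diffAt {f : ℝ × (Fin 3 → ℝ) → ℝ} {p : ℝ × (Fin 3 → ℝ)} (a : Fin 3)
    (hf : ContDiff ℝ 2 f) : DifferentiableAt ℝ (fun q => dx a f q) p :=
  ((contDiff_pd hf).differentiable (by simp)).differentiableAt

lemma dt_diffAt {f : ℝ × (Fin 3 → ℝ) → ℝ} {p : ℝ × (Fin 3 → ℝ)}
    (hf : ContDiff ℝ 2 f) : DifferentiableAt ℝ (fun q => dt f q) p :=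
  ((contDiff_pd hf).differentiable (by simp)).differentiableAt

lemma divU_diffAt (u : ℝ × (Fin 3 → ℝ) → Fin 3 → ℝ) (p : ℝ × (Fin 3 → ℝ))
    (hu : ∀ i, ContDiff ℝ 2 fun p => u p i) :
    DifferentiableAt ℝ (fun q => divU u q) p := by
  unfold divU
  exact DifferentiableAt.fun_sum (fun j _ => dx_diffAt j (hu j))

lemma det_contDiff (F : ℝ × (Fin 3 → ℝ) → Matrix (Fin 3) (Fin 3) ℝ)
    (hF : ∀ i j, ContDiff ℝ 2 fun p => F p i j) :
    ContDiff ℝ 2 (fun r => (F r).det) := by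
  have h00 := hF 0 0; have h01 := hF 0 1; have h02 := hF 0 2
  have h10 := hF 1 0; have h11 := hF 1 1; have h12 := hF 1 2
  have h20 := hF 2 0; have h21 := hF 2 1; have h22 := hF 2 2
  rw [show (fun r => (F r).det) = fun r =>
      F r 0 0 * F r 1 1 * F r 2 2 - F r 0 0 * F r 1 2 * F r 2 1 -
      F r 0 1 * F r 1 0 * F r 2 2 + F r 0 1 * F r 1 2 * F r 2 0 +
      F r 0 2 * F r 1 0 * F r 2 1 - F r 0 2 * F r 1 1 * F r 2 0
    from funext fun r => Matrix.det_fin_three _]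
  fun_prop

lemma Mf_contDiff (F : ℝ × (Fin 3 → ℝ) → Matrix (Fin 3) (Fin 3) ℝ)
    (hF : ∀ i j, ContDiff ℝ 2 fun p => F p i j)
    (hdet : ∀ p, (F p).det ≠ 0) (a b : Fin 3) :
    ContDiff ℝ 2 (Mf F a b) := by
  have h1 : ContDiff ℝ 2 (fun r => ((F r).det)⁻¹) :=
    contDiff_iff_contDiffAt.2 fun q => ((det_contDiff F hF).contDiffAt).inv (hdet q)
  unfold Mf
  refine h1.mul ?_
  simp only [Fin.sum_univ_three]
  exact (((hF a 0).mul (hF b 0)).add ((hF a 1).mul (hF b 1))).add ((hF a 2).mul (hF b 2))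

lemma Gf_contDiff (P : ℝ → ℝ) (ρt : ℝ × (Fin 3 → ℝ) → ℝ)
    (F : ℝ × (Fin 3 → ℝ) → Matrix (Fin 3) (Fin 3) ℝ)
    (hρ : ContDiff ℝ 2 ρt) (hP : ContDiff ℝ 2 P)
    (hF : ∀ i j, ContDiff ℝ 2 fun p => F p i j)
    (hdet : ∀ p, (F p).det ≠ 0) (a b : Fin 3) :
    ContDiff ℝ 2 (Gf P ρt F a b) := by
  unfold Gf
  exact ((Mf_contDiff F hF hdet a b).sub contDiff_const).sub
    (((hP.comp hρ).sub contDiff_const).mul contDiff_const)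

lemma gfun_diffAt (u : ℝ × (Fin 3 → ℝ) → Fin 3 → ℝ)
    (F : ℝ × (Fin 3 → ℝ) → Matrix (Fin 3) (Fin 3) ℝ)
    (hu : ∀ i, ContDiff ℝ 2 fun p => u p i)
    (hF : ∀ i j, ContDiff ℝ 2 fun p => F p i j)
    (hdet : ∀ p, (F p).det ≠ 0) (p : ℝ × (Fin 3 → ℝ)) (a b : Fin 3) :
    DifferentiableAt ℝ (fun q => gfun u F q a b) p := by
  have hM : ∀ a b, DifferentiableAt ℝ (fun q => Mfield F q a b - (if a = b then (1:ℝ) else 0)) p := by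
    intro a b
    simp only [Mfield_apply]
    exact ((Mf_contDiff F hF hdet a b).differentiable (by simp) p).sub
      (differentiableAt_const _)
  have h1 : ∀ a b : Fin 3, DifferentiableAt ℝ (fun q => (Mfield F q - 1) a b) p := by
    intro a b
    have : (fun q => (Mfield F q - 1) a b)
        = fun q => Mfield F q a b - (if a = b then (1:ℝ) else 0) := by
      funext q; rw [Msub_apply, Mfield_apply]
    rw [this]; exact hM a b
  simp only [gfun, Matrix.of_apply, Fin.sum_univ_three]
  refine DifferentiableAt.add (DifferentiableAt.sub (DifferentiableAt.neg ?_) ?_) ?_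
  · exact (((dx_diffAt 0 (hu a)).mul (h1 0 b)).add ((dx_diffAt 1 (hu a)).mul (h1 1 b))).add
      ((dx_diffAt 2 (hu a)).mul (h1 2 b))
  · exact (((h1 a 0).mul (dx_diffAt 0 (hu b))).add ((h1 a 1).mul (dx_diffAt 1 (hu b)))).add
      ((h1 a 2).mul (dx_diffAt 2 (hu b)))
  · exact (divU_diffAt u p hu).mul (h1 a b)

lemma qdiv_diffAt (P : ℝ → ℝ) (ρt : ℝ × (Fin 3 → ℝ) → ℝ)
    (u : ℝ × (Fin 3 → ℝ) → Fin 3 → ℝ)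
    (hρ : ContDiff ℝ 2 ρt) (hP : ContDiff ℝ 2 P)
    (hu : ∀ i, ContDiff ℝ 2 fun p => u p i) (p : ℝ × (Fin 3 → ℝ)) :
    DifferentiableAt ℝ (fun q => qfun P ρt q * divU u q) p := by
  have hder : ContDiff ℝ 1 (deriv P) := by
    have := (contDiff_succ_iff_deriv (n := 1)).1 (by exact_mod_cast hP)
    exact this.2.2
  have hq : DifferentiableAt ℝ (fun q => qfun P ρt q) p := by
    unfold qfun
    simp only [sub_add_cancel]
    refine DifferentiableAt.sub (DifferentiableAt.mul ?_ ?_) (differentiableAt_const _)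
    · exact DifferentiableAt.comp p ((hder.differentiable (by simp)) _)
        (hρ.differentiable (by simp) p)
    · exact hρ.differentiable (by simp) p
  exact hq.mul (divU_diffAt u p hu)

end Helper

/-- Evolution of the effective flux `𝒢 = ∇·G`:
`∂ₜ𝒢 + ∇·((u·∇)G) − ∇(q ∇·u) + ∇·g = Δu + P′(1)∇(∇·u)` componentwise. -/
theorem effective_flux_evolution
    (ρt : ℝ × (Fin 3 → ℝ) → ℝ)
    (u : ℝ × (Fin 3 → ℝ) → Fin 3 → ℝ)
    (F : ℝ × (Fin 3 → ℝ) → Matrix (Fin 3) (Fin 3) ℝ)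
    (P : ℝ → ℝ)
    (hρ : ContDiff ℝ 2 ρt)
    (hu : ∀ i, ContDiff ℝ 2 fun p => u p i)
    (hF : ∀ i j, ContDiff ℝ 2 fun p => F p i j)
    (hP : ContDiff ℝ 2 P)
    (hdet : ∀ p, (F p).det ≠ 0)
    (hcont : ∀ p, dt ρt p + ∑ i, dx i (fun q => ρt q * u q i) p = 0)
    (hFeq : ∀ p i j,
      dt (fun q => F q i j) p + ∑ l, u p l * dx l (fun q => F q i j) p
        = ∑ k, dx k (fun q => u q i) p * F p k j) :
    ∀ p i,
      dt (fun q => ∑ j, dx j (fun r => Gfield P ρt F r i j) q) p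
        + ∑ j, dx j (fun q => ∑ l, u q l * dx l (fun r => Gfield P ρt F r i j) q) p
        - dx i (fun q => qfun P ρt q * divU u q) p
        + ∑ j, dx j (fun q => gfun u F q i j) p
      = (∑ j, dx j (fun q => dx j (fun r => u r i) q) p)
        + deriv P 1 * dx i (fun q => divU u q) p := by
  intro p i
  have hu' : ∀ i, Differentiable ℝ fun p => u p i := fun i => (hu i).differentiable (by simp)
  have hF' : ∀ i j, Differentiable ℝ fun p => F p i j :=
    fun i j => (hF i j).differentiable (by simp)
  have hρ' : Differentiable ℝ ρt := hρ.differentiable (by simp)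
  have hP' : Differentiable ℝ P := hP.differentiable (by simp)
  have hGc : ∀ a b, ContDiff ℝ 2 (Helper.Gf P ρt F a b) :=
    fun a b => Helper.Gf_contDiff P ρt F hρ hP hF hdet a b
  -- replace Gfield entries by Gf
  simp only [Helper.Gfield_apply]
  -- key first-order identity as functions
  have e3 : ∀ b : Fin 3,
      (fun q => dt (Helper.Gf P ρt F i b) q + ∑ l, u q l * dx l (Helper.Gf P ρt F i b) q)
      = fun q => -(gfun u F q i b)
          + ((if i = b then (1:ℝ) else 0) * (qfun P ρt q * divU u q)
          + (dx b (fun r => u r i) q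
          + (dx i (fun r => u r b) q
          + (if i = b then (1:ℝ) else 0) * ((deriv P 1 - 1) * divU u q)))) := by
    intro b
    funext q
    rw [← Helper.pd_one_u u _ q,
      Helper.G_pd ρt u F P hρ' hu' hF' hP' hdet hcont hFeq q i b]
    ring
  -- step 1 : commute dt with the sum and the dx's
  have step1 : dt (fun q => ∑ j, dx j (Helper.Gf P ρt F i j) q) p
      = ∑ j : Fin 3, dx j (fun q => dt (Helper.Gf P ρt F i j) q) p := by
    rw [Helper.dt_sum Finset.univ _ (fun j _ => Helper.dx_diffAt j (hGc i j))]
    exact Finset.sum_congr rfl fun j _ => Helper.dt_dx_swap (hGc i j)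
  -- differentiability of the transported pieces
  have hdtG : ∀ b : Fin 3, DifferentiableAt ℝ (fun q => dt (Helper.Gf P ρt F i b) q) p :=
    fun b => Helper.dt_diffAt (hGc i b)
  have hsum2 : ∀ b : Fin 3,
      DifferentiableAt ℝ (fun q => ∑ l, u q l * dx l (Helper.Gf P ρt F i b) q) p :=
    fun b => DifferentiableAt.fun_sum fun l _ =>
      ((hu' l).differentiableAt).mul (Helper.dx_diffAt l (hGc i b))
  -- step 2+3 : each j-summand
  have step2 : ∀ j : Fin 3,
      dx j (fun q => dt (Helper.Gf P ρt F i j) q) p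
        + dx j (fun q => ∑ l, u q l * dx l (Helper.Gf P ρt F i j) q) p
      = -(dx j (fun q => gfun u F q i j) p)
        + ((if i = j then (1:ℝ) else 0) * dx j (fun q => qfun P ρt q * divU u q) p
        + (dx j (fun q => dx j (fun r => u r i) q) p
        + (dx j (fun q => dx i (fun r => u r j) q) p
        + (if i = j then (1:ℝ) else 0) * ((deriv P 1 - 1)
            * dx j (fun q => divU u q) p)))) := by
    intro j
    rw [← Helper.dx_add j (hdtG j) (hsum2 j), e3 j]
    rw [Helper.dx_add j
        ((Helper.gfun_diffAt u F hu hF hdet p i j).fun_neg)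
        (DifferentiableAt.fun_add
          ((Helper.qdiv_diffAt P ρt u hρ hP hu p).const_mul _)
          (DifferentiableAt.fun_add (Helper.dx_diffAt j (hu i))
            (DifferentiableAt.fun_add (Helper.dx_diffAt i (hu j))
              (((Helper.divU_diffAt u p hu).const_mul _).const_mul _))))]
    rw [Helper.dx_neg (f := fun q => gfun u F q i j) j]
    rw [Helper.dx_add j
        ((Helper.qdiv_diffAt P ρt u hρ hP hu p).const_mul _)
        (DifferentiableAt.fun_add (Helper.dx_diffAt j (hu i))
          (DifferentiableAt.fun_add (Helper.dx_diffAt i (hu j))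
            (((Helper.divU_diffAt u p hu).const_mul _).const_mul _)))]
    rw [Helper.dx_const_mul j _ (Helper.qdiv_diffAt P ρt u hρ hP hu p)]
    rw [Helper.dx_add j (Helper.dx_diffAt j (hu i))
        (DifferentiableAt.fun_add (Helper.dx_diffAt i (hu j))
          (((Helper.divU_diffAt u p hu).const_mul _).const_mul _))]
    rw [Helper.dx_add j (Helper.dx_diffAt i (hu j))
        (((Helper.divU_diffAt u p hu).const_mul _).const_mul _)]
    rw [Helper.dx_const_mul j _ ((Helper.divU_diffAt u p hu).const_mul _)]
    rw [Helper.dx_const_mul j _ (Helper.divU_diffAt u p hu)]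
  -- step 4 : swap mixed second derivatives of u
  have step4 : ∑ j : Fin 3, dx j (fun q => dx i (fun r => u r j) q) p
      = dx i (fun q => divU u q) p := by
    have h1 : ∀ j : Fin 3, dx j (fun q => dx i (fun r => u r j) q) p
        = dx i (fun q => dx j (fun r => u r j) q) p := fun j => Helper.dx_dx_swap (hu j)
    rw [Finset.sum_congr rfl fun j _ => h1 j,
      ← Helper.dx_sum i Finset.univ _ (fun j _ => Helper.dx_diffAt j (hu j))]
    rfl
  -- assemble
  rw [step1, ← Finset.sum_add_distrib]
  rw [Finset.sum_congr rfl fun j _ => step2 j]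
  rw [Finset.sum_add_distrib, Finset.sum_add_distrib, Finset.sum_add_distrib,
    Finset.sum_add_distrib]
  simp only [ite_mul, one_mul, zero_mul, Finset.sum_ite_eq, Finset.mem_univ, if_true]
  rw [step4, Finset.sum_neg_distrib]
  ring
end

section
/- (Composition second-derivative estimate, Proposition 2.2, case k = 2.) Let f : ℝ → ℝ be twice continuously differentiable with M₁ = sup_{|y| ≤ 1} |f′(y)| and M₂ = sup_{|y| ≤ 1} |f″(y)|, and let v : ℝ³ → ℝ be twice continuously differentiable with |v(x)| ≤ 1 for every x. Then ‖∇²(f ∘ v)‖_{L²} ≤ M₂ · ‖∇v‖²_{L⁴} + M₁ · ‖∇²v‖_{L²}, where all norms are over ℝ³ with Lebesgue measure. -/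
open MeasureTheory
open scoped ENNReal

-- auxiliary: fderiv of scalar composition
lemma fderiv_scalar_comp {g : ℝ → ℝ} {v : (Fin 3 → ℝ) → ℝ}
    (hg : Differentiable ℝ g) (hv : Differentiable ℝ v) (x : Fin 3 → ℝ) :
    fderiv ℝ (fun y => g (v y)) x = deriv g (v x) • fderiv ℝ v x := by
  rw [show (fun y => g (v y)) = g ∘ v from rfl, fderiv_comp x (hg _) (hv x)]
  ext h
  simp only [ContinuousLinearMap.comp_apply, ContinuousLinearMap.smul_apply]
  calc (fderiv ℝ g (v x)) ((fderiv ℝ v x) h)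
      = (fderiv ℝ g (v x)) (((fderiv ℝ v x) h) • 1) := by rw [smul_eq_mul, mul_one]
    _ = ((fderiv ℝ v x) h) • (fderiv ℝ g (v x)) 1 := (fderiv ℝ g (v x)).map_smul _ _
    _ = deriv g (v x) • (fderiv ℝ v x) h := by rw [fderiv_apply_one_eq_deriv, smul_eq_mul, smul_eq_mul, mul_comm]

lemma norm_iteratedFDeriv_two {w : (Fin 3 → ℝ) → ℝ} (x : Fin 3 → ℝ) :
    ‖iteratedFDeriv ℝ 2 w x‖ = ‖fderiv ℝ (fderiv ℝ w) x‖ := by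
  rw [← norm_iteratedFDeriv_fderiv, ← norm_iteratedFDeriv_fderiv, norm_iteratedFDeriv_zero]

/-- Composition second-derivative estimate: if `M₁ = sup_{|y|≤1} |f′(y)|`,
`M₂ = sup_{|y|≤1} |f″(y)|` and `|v| ≤ 1`, then
`‖∇²(f ∘ v)‖_{L²} ≤ M₂ ‖∇v‖²_{L⁴} + M₁ ‖∇²v‖_{L²}`. -/
theorem composition_second_derivative_estimate
    (f : ℝ → ℝ) (hf : ContDiff ℝ 2 f)
    (M₁ : ℝ) (hM₁ : M₁ = sSup ((fun y => |deriv f y|) '' Set.Icc (-1 : ℝ) 1))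
    (M₂ : ℝ) (hM₂ : M₂ = sSup ((fun y => |deriv (deriv f) y|) '' Set.Icc (-1 : ℝ) 1))
    (v : (Fin 3 → ℝ) → ℝ) (hv : ContDiff ℝ 2 v)
    (hvb : ∀ x, |v x| ≤ 1) :
    eLpNorm (fun x => ‖iteratedFDeriv ℝ 2 (fun y => f (v y)) x‖) 2 volume
      ≤ ENNReal.ofReal M₂ * (eLpNorm (fun x => ‖fderiv ℝ v x‖) 4 volume) ^ 2
        + ENNReal.ofReal M₁ * eLpNorm (fun x => ‖iteratedFDeriv ℝ 2 v x‖) 2 volume := by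
  -- continuity facts
  have hf1 : Differentiable ℝ f := hf.differentiable two_ne_zero
  have hdf : ContDiff ℝ 1 (deriv f) := by
    have h2 : ContDiff ℝ (1 + 1) f := by rw [one_add_one_eq_two]; exact hf
    exact (contDiff_succ_iff_deriv.mp h2).2.2
  have hdf1 : Differentiable ℝ (deriv f) := hdf.differentiable one_ne_zero
  have hv1 : Differentiable ℝ v := hv.differentiable two_ne_zero
  have hfv : ContDiff ℝ 1 (fderiv ℝ v) := hv.fderiv_right (by norm_num)
  have hfv1 : Differentiable ℝ (fderiv ℝ v) := hfv.differentiable one_ne_zero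
  have hcdf : Continuous (deriv f) := hf.continuous_deriv one_le_two
  have hcddf : Continuous (deriv (deriv f)) := hdf.continuous_deriv le_rfl
  -- sup bounds
  have hbdd1 : BddAbove ((fun y => |deriv f y|) '' Set.Icc (-1 : ℝ) 1) :=
    (isCompact_Icc.image hcdf.abs).bddAbove
  have hbdd2 : BddAbove ((fun y => |deriv (deriv f) y|) '' Set.Icc (-1 : ℝ) 1) :=
    (isCompact_Icc.image hcddf.abs).bddAbove
  have hmem : ∀ x, v x ∈ Set.Icc (-1 : ℝ) 1 := fun x => abs_le.mp (hvb x)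
  have hM1le : ∀ x, |deriv f (v x)| ≤ M₁ := fun x =>
    hM₁ ▸ le_csSup hbdd1 ⟨v x, hmem x, rfl⟩
  have hM2le : ∀ x, |deriv (deriv f) (v x)| ≤ M₂ := fun x =>
    hM₂ ▸ le_csSup hbdd2 ⟨v x, hmem x, rfl⟩
  have hM1nn : 0 ≤ M₁ := le_trans (abs_nonneg _) (hM1le 0)
  have hM2nn : 0 ≤ M₂ := le_trans (abs_nonneg _) (hM2le 0)
  -- pointwise bound
  have key : ∀ x, ‖iteratedFDeriv ℝ 2 (fun y => f (v y)) x‖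
      ≤ M₂ * ‖fderiv ℝ v x‖ ^ 2 + M₁ * ‖iteratedFDeriv ℝ 2 v x‖ := by
    intro x
    rw [norm_iteratedFDeriv_two, norm_iteratedFDeriv_two]
    have h1 : fderiv ℝ (fun y => f (v y)) = fun y => deriv f (v y) • fderiv ℝ v y :=
      funext fun y => fderiv_scalar_comp hf1 hv1 y
    rw [h1, fderiv_fun_smul (by
        exact ((hdf1 _).comp x (hv1 x) : DifferentiableAt ℝ (fun y => deriv f (v y)) x))
      (hfv1 x)]
    have h2 : fderiv ℝ (fun y => deriv f (v y)) x = deriv (deriv f) (v x) • fderiv ℝ v x :=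
      fderiv_scalar_comp hdf1 hv1 x
    rw [h2]
    calc ‖deriv f (v x) • fderiv ℝ (fderiv ℝ v) x
          + (deriv (deriv f) (v x) • fderiv ℝ v x).smulRight (fderiv ℝ v x)‖
        ≤ ‖deriv f (v x) • fderiv ℝ (fderiv ℝ v) x‖
          + ‖(deriv (deriv f) (v x) • fderiv ℝ v x).smulRight (fderiv ℝ v x)‖ := norm_add_le (E := ((Fin 3 → ℝ) →L[ℝ] (Fin 3 → ℝ) →L[ℝ] ℝ)) _ _
      _ ≤ |deriv f (v x)| * ‖fderiv ℝ (fderiv ℝ v) x‖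
          + |deriv (deriv f) (v x)| * ‖fderiv ℝ v x‖ ^ 2 := by
          have e1 := ContinuousLinearMap.opNorm_smul_le (deriv f (v x))
            (fderiv ℝ (fderiv ℝ v) x)
          rw [Real.norm_eq_abs] at e1
          have e2 : ‖(deriv (deriv f) (v x) • fderiv ℝ v x).smulRight (fderiv ℝ v x)‖
              ≤ |deriv (deriv f) (v x)| * ‖fderiv ℝ v x‖ ^ 2 := by
            rw [ContinuousLinearMap.norm_smulRight_apply]
            have e3 := ContinuousLinearMap.opNorm_smul_le (deriv (deriv f) (v x)) (fderiv ℝ v x)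
            rw [Real.norm_eq_abs] at e3
            nlinarith [norm_nonneg (fderiv ℝ v x), abs_nonneg (deriv (deriv f) (v x))]
          linarith
      _ ≤ M₁ * ‖fderiv ℝ (fderiv ℝ v) x‖ + M₂ * ‖fderiv ℝ v x‖ ^ 2 := by
          gcongr
          exacts [hM1le x, hM2le x]
      _ = M₂ * ‖fderiv ℝ v x‖ ^ 2 + M₁ * ‖fderiv ℝ (fderiv ℝ v) x‖ := by ring
  -- measure theory
  set A : (Fin 3 → ℝ) → ℝ := fun x => M₂ * ‖fderiv ℝ v x‖ ^ 2 with hA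
  set B : (Fin 3 → ℝ) → ℝ := fun x => M₁ * ‖iteratedFDeriv ℝ 2 v x‖ with hB
  have hAc : Continuous A := continuous_const.mul ((hfv.continuous.norm).pow 2)
  have hBc : Continuous B :=
    continuous_const.mul (hv.continuous_iteratedFDeriv (le_refl 2)).norm
  have step1 : eLpNorm (fun x => ‖iteratedFDeriv ℝ 2 (fun y => f (v y)) x‖) 2 volume
      ≤ eLpNorm (A + B) 2 volume := by
    apply eLpNorm_mono_real
    intro x
    rw [norm_norm]
    exact key x
  have step2 : eLpNorm (A + B) 2 volume ≤ eLpNorm A 2 volume + eLpNorm B 2 volume :=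
    eLpNorm_add_le hAc.aestronglyMeasurable hBc.aestronglyMeasurable one_le_two
  have hA2 : eLpNorm A 2 volume
      = ENNReal.ofReal M₂ * (eLpNorm (fun x => ‖fderiv ℝ v x‖) 4 volume) ^ 2 := by
    have : A = M₂ • (fun x => ‖fderiv ℝ v x‖ ^ 2) := by
      funext x; simp [hA]
    rw [this, eLpNorm_const_smul]
    congr 1
    · rw [← ofReal_norm, Real.norm_eq_abs, abs_of_nonneg hM2nn]
    · have h4 : (fun x => ‖fderiv ℝ v x‖ ^ 2)
          = fun x => ‖(fun x => ‖fderiv ℝ v x‖) x‖ ^ (2 : ℝ) := by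
        funext x
        rw [norm_norm, Real.rpow_two]
      rw [h4, eLpNorm_norm_rpow _ (by norm_num : (0:ℝ) < 2), ENNReal.rpow_two]
      norm_num
  have hB2 : eLpNorm B 2 volume
      = ENNReal.ofReal M₁ * eLpNorm (fun x => ‖iteratedFDeriv ℝ 2 v x‖) 2 volume := by
    have : B = M₁ • (fun x => ‖iteratedFDeriv ℝ 2 v x‖) := by
      funext x; simp [hB]
    rw [this, eLpNorm_const_smul]
    rw [← ofReal_norm, Real.norm_eq_abs, abs_of_nonneg hM1nn]
  calc eLpNorm (fun x => ‖iteratedFDeriv ℝ 2 (fun y => f (v y)) x‖) 2 volume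
      ≤ eLpNorm A 2 volume + eLpNorm B 2 volume := le_trans step1 step2
    _ = _ := by rw [hA2, hB2]
end

section
/- (Weighted-in-time interpolation, the core of Proposition 2.3.) Let θ ∈ (0,1) and let A, B : [0,∞) → [0,∞] be measurable. Then ∫₀^∞ A(t)^θ B(t)^{1−θ} dt ≤ (1−θ)^{−1/2} · (∫₀^∞ (1+t) A(t)² dt)^{θ/2} · (∫₀^∞ (1+t)² B(t)² dt)^{(1−θ)/2}. -/
open MeasureTheory
open scoped ENNReal

lemma aux_weight_integral (θ : ℝ) (hθ0 : 0 < θ) (hθ1 : θ < 1) :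
    ∫⁻ t in Set.Ici (0 : ℝ), ENNReal.ofReal (1 + t) ^ (θ - 2)
      = ENNReal.ofReal (1 / (1 - θ)) := by
  have hemb : MeasurableEmbedding (fun x : ℝ => 1 + x) :=
    (Homeomorph.addLeft (1 : ℝ)).measurableEmbedding
  have hmp : MeasurePreserving (fun x : ℝ => 1 + x) volume volume :=
    measurePreserving_add_left volume 1
  have hpre : (fun x : ℝ => 1 + x) ⁻¹' Set.Ici (1 : ℝ) = Set.Ici 0 := by
    ext x; simp
  have h1 : ∫⁻ t in Set.Ici (0 : ℝ), ENNReal.ofReal (1 + t) ^ (θ - 2)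
      = ∫⁻ s in Set.Ici (1 : ℝ), ENNReal.ofReal s ^ (θ - 2) := by
    rw [← hpre]
    exact hmp.setLIntegral_comp_preimage_emb hemb
      (fun s => ENNReal.ofReal s ^ (θ - 2)) _
  rw [h1, ← restrict_Ioi_eq_restrict_Ici]
  have h2 : ∫⁻ s in Set.Ioi (1 : ℝ), ENNReal.ofReal s ^ (θ - 2)
      = ∫⁻ s in Set.Ioi (1 : ℝ), ENNReal.ofReal (s ^ (θ - 2)) := by
    refine setLIntegral_congr_fun measurableSet_Ioi ?_
    intro s hs
    dsimp only
    rw [ENNReal.ofReal_rpow_of_pos (lt_trans one_pos hs)]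
  rw [h2]
  rw [← ofReal_integral_eq_lintegral_ofReal
    (integrableOn_Ioi_rpow_of_lt (by linarith) one_pos)
    ((ae_restrict_iff' measurableSet_Ioi).2 (Filter.Eventually.of_forall
      fun s hs => Real.rpow_nonneg (by linarith [Set.mem_Ioi.1 hs]) _))]
  congr 1
  rw [integral_Ioi_rpow_of_lt (by linarith) one_pos, Real.one_rpow]
  have h3 : θ - 2 + 1 = -(1 - θ) := by ring
  rw [h3, neg_div_neg_eq]

/-- Weighted-in-time interpolation: for `θ ∈ (0,1)` and measurable
`A, B : [0,∞) → [0,∞]`,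
`∫₀^∞ AᶿB^{1−θ} ≤ (1−θ)^{−1/2} (∫₀^∞ (1+t)A²)^{θ/2} (∫₀^∞ (1+t)²B²)^{(1−θ)/2}`. -/
theorem weighted_time_interpolation
    (θ : ℝ) (hθ0 : 0 < θ) (hθ1 : θ < 1)
    (A B : ℝ → ℝ≥0∞) (hA : Measurable A) (hB : Measurable B) :
    ∫⁻ t in Set.Ici (0 : ℝ), A t ^ θ * B t ^ (1 - θ)
      ≤ ENNReal.ofReal ((1 - θ) ^ (-(1 : ℝ) / 2))
        * (∫⁻ t in Set.Ici (0 : ℝ), ENNReal.ofReal (1 + t) * A t ^ (2 : ℝ)) ^ (θ / 2)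
        * (∫⁻ t in Set.Ici (0 : ℝ), ENNReal.ofReal ((1 + t) ^ 2) * B t ^ (2 : ℝ))
            ^ ((1 - θ) / 2) := by
  set f : Fin 3 → ℝ → ℝ≥0∞ := ![
    fun t => ENNReal.ofReal (1 + t) * A t ^ (2 : ℝ),
    fun t => ENNReal.ofReal ((1 + t) ^ 2) * B t ^ (2 : ℝ),
    fun t => ENNReal.ofReal (1 + t) ^ (θ - 2)] with hf_def
  set p : Fin 3 → ℝ := ![θ / 2, (1 - θ) / 2, 1 / 2] with hp_def
  have hm1 : Measurable fun t : ℝ => ENNReal.ofReal (1 + t) :=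
    ENNReal.measurable_ofReal.comp (measurable_const.add measurable_id)
  have hm2 : Measurable fun t : ℝ => ENNReal.ofReal ((1 + t) ^ 2) :=
    ENNReal.measurable_ofReal.comp ((measurable_const.add measurable_id).pow_const 2)
  have hmeas : ∀ i ∈ Finset.univ, AEMeasurable (f i)
      (volume.restrict (Set.Ici (0 : ℝ))) := by
    intro i _
    fin_cases i
    · exact (hm1.mul (hA.pow_const _)).aemeasurable
    · exact (hm2.mul (hB.pow_const _)).aemeasurable
    · exact (hm1.pow_const _).aemeasurable
  have hsum : ∑ i ∈ Finset.univ, p i = 1 := by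
    simp [hp_def, Fin.sum_univ_three]; ring
  have hnn : ∀ i ∈ Finset.univ, 0 ≤ p i := by
    intro i _
    fin_cases i <;> simp [hp_def] <;> linarith
  have hpoint : ∀ t ∈ Set.Ici (0 : ℝ),
      A t ^ θ * B t ^ (1 - θ) = ∏ i, f i t ^ p i := by
    intro t ht
    have ht' : (0 : ℝ) < 1 + t := by simp at ht; linarith
    set x := ENNReal.ofReal (1 + t) with hx
    have hx0 : x ≠ 0 := by simp [hx, ht']
    have hxt : x ≠ ⊤ := ENNReal.ofReal_ne_top
    have hsq : ENNReal.ofReal ((1 + t) ^ 2) = x ^ ((2 : ℕ) : ℝ) := by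
      rw [ENNReal.ofReal_pow ht'.le, ENNReal.rpow_natCast]
    rw [Fin.prod_univ_three]
    simp only [hf_def, hp_def, Matrix.cons_val_zero, Matrix.cons_val_one,
      Matrix.head_cons, Matrix.cons_val_two, Matrix.tail_cons]
    rw [hsq, ENNReal.mul_rpow_of_nonneg _ _ (by linarith : (0:ℝ) ≤ θ / 2),
      ENNReal.mul_rpow_of_nonneg _ _ (by linarith : (0:ℝ) ≤ (1 - θ) / 2),
      ← ENNReal.rpow_mul, ← ENNReal.rpow_mul, ← ENNReal.rpow_mul,
      ← ENNReal.rpow_mul,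
      show (2 : ℝ) * (θ / 2) = θ by ring,
      show (2 : ℝ) * ((1 - θ) / 2) = 1 - θ by ring,
      show ((2 : ℕ) : ℝ) * ((1 - θ) / 2) = 1 - θ by push_cast; ring]
    have hxsum : x ^ (θ / 2) * x ^ (1 - θ) * x ^ ((θ - 2) * (1 / 2)) = 1 := by
      rw [← ENNReal.rpow_add _ _ hx0 hxt, ← ENNReal.rpow_add _ _ hx0 hxt,
        show θ / 2 + (1 - θ) + (θ - 2) * (1 / 2) = 0 by ring, ENNReal.rpow_zero]
    symm
    calc x ^ (θ / 2) * A t ^ θ * (x ^ (1 - θ) * B t ^ (1 - θ))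
          * x ^ ((θ - 2) * (1 / 2))
        = x ^ (θ / 2) * x ^ (1 - θ) * x ^ ((θ - 2) * (1 / 2))
          * (A t ^ θ * B t ^ (1 - θ)) := by ring
      _ = A t ^ θ * B t ^ (1 - θ) := by rw [hxsum, one_mul]
  have key := ENNReal.lintegral_prod_norm_pow_le (μ := volume.restrict (Set.Ici (0:ℝ)))
    Finset.univ hmeas hsum hnn
  have hI2 : (∫⁻ t in Set.Ici (0 : ℝ), f 2 t) ^ p 2
      = ENNReal.ofReal ((1 - θ) ^ (-(1 : ℝ) / 2)) := by
    simp only [hf_def, hp_def, Matrix.cons_val_two, Matrix.tail_cons,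
      Matrix.head_cons, Matrix.cons_val_one]
    rw [aux_weight_integral θ hθ0 hθ1,
      ENNReal.ofReal_rpow_of_pos (by have := sub_pos.mpr hθ1; positivity : (0:ℝ) < 1 / (1 - θ))]
    congr 1
    rw [neg_div, Real.rpow_neg (by linarith), one_div,
      Real.inv_rpow (by linarith)]
  calc ∫⁻ t in Set.Ici (0 : ℝ), A t ^ θ * B t ^ (1 - θ)
      = ∫⁻ t in Set.Ici (0 : ℝ), ∏ i, f i t ^ p i :=
        setLIntegral_congr_fun measurableSet_Ici
          hpoint
    _ ≤ ∏ i, (∫⁻ t in Set.Ici (0 : ℝ), f i t) ^ p i := key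
    _ = _ := by
        rw [Fin.prod_univ_three, hI2]
        simp only [hf_def, hp_def, Matrix.cons_val_zero, Matrix.cons_val_one,
          Matrix.head_cons]
        ring
end
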